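/- Hardy's inequality: there exists a constant c > 0 such that for every function f in the Sobolev space W^{1,2}(ℝ³), the integral over ℝ³ of |t|^{-2}|f(t)|² dt is at most c times the integral over ℝ³ of |∇f(t)|² dt. -/

import Mathlib

open MeasureTheory Set Metric intervalIntegral
open scoped ENNReal

noncomputable abbrev E3 := EuclideanSpace ℝ (Fin 3)

lemma lintegral_polar (φ : E3 → ℝ≥0∞) (hφ : Measurable φ) :
    ∫⁻ x, φ x = ∫⁻ (ω : sphere (0:E3) 1), ∫⁻ r in Ioi (0:ℝ),
      ENNReal.ofReal (r^2) * φ (r • (ω:E3)) ∂volume ∂(volume : Measure E3).toSphere := by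
  have hdim : Module.finrank ℝ E3 = 3 := by simp
  have h0 : ∫⁻ x, φ x = ∫⁻ x in ({0}ᶜ : Set E3), φ x := by
    rw [restrict_compl_singleton]
  rw [h0, ← lintegral_subtype_comap (measurableSet_singleton (0:E3)).compl]
  have mp := (volume : Measure E3).measurePreserving_homeomorphUnitSphereProd
  rw [hdim] at mp
  have hmeas : Measurable fun p : sphere (0:E3) 1 × Ioi (0:ℝ) =>
      φ (((homeomorphUnitSphereProd E3).symm p).val) :=
    (hφ.comp measurable_subtype_coe).comp (homeomorphUnitSphereProd E3).symm.measurable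
  have key := mp.lintegral_comp hmeas
  simp only [Homeomorph.symm_apply_apply] at key
  rw [key, lintegral_prod _ hmeas.aemeasurable]
  refine lintegral_congr fun ω => ?_
  have hco : ∀ r : Ioi (0:ℝ), ((homeomorphUnitSphereProd E3).symm (ω, r)).val
      = (r:ℝ) • (ω:E3) := fun r => by simp
  simp_rw [hco]
  rw [show ((3:ℕ) - 1) = 2 from rfl, Measure.volumeIoiPow,
    lintegral_withDensity_eq_lintegral_mul _ (by fun_prop) _,
    ← lintegral_subtype_comap measurableSet_Ioi]
  rfl
  exact hφ.comp (by fun_prop)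

lemma hasDerivAt_norm_sq_comp (g : ℝ → ℂ) (hg : Differentiable ℝ g) (r : ℝ) :
    HasDerivAt (fun t => ‖g t‖^2) (2 * ((starRingEnd ℂ) (g r) * deriv g r).re) r := by
  have hgr : HasDerivAt (fun t => (g t).re) ((deriv g r).re) r :=
    (Complex.reCLM.hasFDerivAt.comp_hasDerivAt r (hg r).hasDerivAt)
  have hgi : HasDerivAt (fun t => (g t).im) ((deriv g r).im) r :=
    (Complex.imCLM.hasFDerivAt.comp_hasDerivAt r (hg r).hasDerivAt)
  have h := (hgr.pow 2).add (hgi.pow 2)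
  have heq : (fun t => ‖g t‖^2) = fun t => (g t).re^2 + (g t).im^2 := by
    funext t
    rw [Complex.sq_norm, Complex.normSq_apply]; ring
  rw [heq]
  refine (h : HasDerivAt (fun t => (g t).re^2 + (g t).im^2) _ r).congr_deriv ?_
  simp [Complex.mul_re, Complex.conj_re, Complex.conj_im]
  ring

lemma abs_D_le (z w : ℂ) : |2 * ((starRingEnd ℂ) z * w).re| ≤ 2 * ‖z‖ * ‖w‖ := by
  rw [abs_mul, abs_two]
  have h1 : |((starRingEnd ℂ) z * w).re| ≤ ‖(starRingEnd ℂ) z * w‖ :=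
    Complex.abs_re_le_norm _
  have h2 : ‖(starRingEnd ℂ) z * w‖ = ‖z‖ * ‖w‖ := by
    rw [norm_mul, Complex.norm_conj]
  nlinarith [norm_nonneg z, norm_nonneg w]

lemma hardy_core (g : ℝ → ℂ) (hg : Differentiable ℝ g) {ε R : ℝ} (hε : 0 < ε) (hεR : ε ≤ R)
    (hIB : IntegrableOn (fun r => r^2*‖deriv g r‖^2) (Ioc ε R) volume) :
    ∫ r in Ioc ε R, ‖g r‖^2 ≤ 2*(R*‖g R‖^2)
      + 4*(∫ r in Ioc ε R, r^2*‖deriv g r‖^2) := by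
  set D : ℝ → ℝ := fun r => 2 * ((starRingEnd ℂ) (g r) * deriv g r).re with hD
  have hgc : Continuous g := hg.continuous
  have hDmeas : Measurable D := by
    have : Measurable (deriv g) := measurable_deriv g
    fun_prop
  -- interval integrabilities
  have hc1 : Continuous fun r : ℝ => ‖g r‖^2 := by fun_prop
  have II1 : IntervalIntegrable (fun r => ‖g r‖^2) volume ε R := hc1.intervalIntegrable ε R
  have II2 : IntervalIntegrable (fun r => r^2*‖deriv g r‖^2) volume ε R :=
    (intervalIntegrable_iff_integrableOn_Ioc_of_le hεR).2 hIB
  have hDbound : ∀ r, |r * D r| ≤ 2*‖g r‖^2 + r^2*‖deriv g r‖^2 := by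
    intro r
    have h1 : |r * D r| ≤ |r| * (2 * ‖g r‖ * ‖deriv g r‖) := by
      rw [abs_mul]
      exact mul_le_mul_of_nonneg_left (abs_D_le _ _) (abs_nonneg r)
    nlinarith [norm_nonneg (g r), norm_nonneg (deriv g r), abs_nonneg r, sq_abs r,
      sq_nonneg (‖g r‖ - |r| * ‖deriv g r‖), sq_nonneg (|r| * ‖deriv g r‖)]
  have II4 : IntervalIntegrable (fun r => r * D r) volume ε R := by
    rw [intervalIntegrable_iff_integrableOn_Ioc_of_le hεR]
    have hmaj : IntegrableOn (fun r => 2*‖g r‖^2 + r^2*‖deriv g r‖^2) (Ioc ε R) volume :=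
      ((continuous_const.mul hc1).integrableOn_Ioc).add hIB
    refine Integrable.mono hmaj ?_ ?_
    · exact ((measurable_id.mul hDmeas).aestronglyMeasurable).restrict
    · refine Filter.Eventually.of_forall fun r => ?_
      rw [Real.norm_eq_abs, Real.norm_eq_abs]
      refine (hDbound r).trans (le_abs_self _)
  have II3 : IntervalIntegrable (fun r => ‖g r‖^2 + r * D r) volume ε R := II1.add II4
  -- FTC
  have hderiv : ∀ r ∈ uIcc ε R, HasDerivAt (fun t => t * ‖g t‖^2) (‖g r‖^2 + r * D r) r := by
    intro r _
    have := (hasDerivAt_id r).mul (hasDerivAt_norm_sq_comp g hg r)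
    refine (this : HasDerivAt (fun t => t * ‖g t‖^2) _ r).congr_deriv ?_
    simp only [hD, id]; ring
  have hFTC : ∫ r in ε..R, (‖g r‖^2 + r * D r) = R*‖g R‖^2 - ε*‖g ε‖^2 :=
    integral_eq_sub_of_hasDerivAt hderiv II3
  have hsplit : ∫ r in ε..R, (‖g r‖^2 + r * D r)
      = (∫ r in ε..R, ‖g r‖^2) + ∫ r in ε..R, r * D r :=
    integral_add II1 II4
  -- bound the cross term
  have hcross : -(∫ r in ε..R, r * D r)
      ≤ (1/2) * (∫ r in ε..R, ‖g r‖^2) + 2 * (∫ r in ε..R, r^2*‖deriv g r‖^2) := by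
    rw [← intervalIntegral.integral_neg, ← intervalIntegral.integral_const_mul,
      ← intervalIntegral.integral_const_mul, ← intervalIntegral.integral_add
        (II1.const_mul _) (II2.const_mul _)]
    refine integral_mono_on hεR II4.neg ((II1.const_mul _).add (II2.const_mul _)) fun r hr => ?_
    have h1 : |r * D r| ≤ 2 * (r * ‖g r‖ * ‖deriv g r‖) := by
      rw [abs_mul, abs_of_nonneg (hε.le.trans hr.1)]
      calc r * |D r| ≤ r * (2 * ‖g r‖ * ‖deriv g r‖) :=
            mul_le_mul_of_nonneg_left (abs_D_le _ _) (hε.le.trans hr.1)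
        _ = 2 * (r * ‖g r‖ * ‖deriv g r‖) := by ring
    have h2 : 2 * (r * ‖g r‖ * ‖deriv g r‖) ≤ (1/2) * ‖g r‖^2 + 2 * (r^2 * ‖deriv g r‖^2) := by
      nlinarith [sq_nonneg (‖g r‖ - 2 * (r * ‖deriv g r‖)), norm_nonneg (g r),
        norm_nonneg (deriv g r), hε.le.trans hr.1]
    have := neg_le_abs (r * D r)
    linarith
  -- put together
  have hX : ∫ r in ε..R, ‖g r‖^2 ≤ 2*(R*‖g R‖^2) + 4*(∫ r in ε..R, r^2*‖deriv g r‖^2) := by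
    have hε2 : 0 ≤ ε*‖g ε‖^2 := by positivity
    nlinarith [hFTC, hsplit, hcross]
  rwa [intervalIntegral.integral_of_le hεR, intervalIntegral.integral_of_le hεR] at hX

lemma hardy_decay (g : ℝ → ℂ)
    (hA2 : ∫⁻ r in Ioi (0:ℝ), ENNReal.ofReal (r^2 * ‖g r‖^2) ≠ ∞) :
    ∀ δ > (0:ℝ), ∀ R₀ : ℝ, ∃ R, max R₀ 1 ≤ R ∧ R * ‖g R‖^2 < δ := by
  intro δ hδ R₀
  by_contra hcon
  push_neg at hcon
  set M := max R₀ 1 with hM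
  have hM1 : (1:ℝ) ≤ M := le_max_right _ _
  apply hA2
  rw [eq_top_iff]
  calc (⊤:ℝ≥0∞) = ∫⁻ _ in Ioi M, ENNReal.ofReal (δ * M) ∂volume := by
        rw [setLIntegral_const, Real.volume_Ioi, ENNReal.mul_top]
        simp only [ne_eq, ENNReal.ofReal_eq_zero, not_le]
        positivity
    _ ≤ ∫⁻ r in Ioi M, ENNReal.ofReal (r^2 * ‖g r‖^2) := by
        refine setLIntegral_mono' measurableSet_Ioi fun r hr => ?_
        have hrM : M ≤ r := (le_of_lt hr)
        have h1 : δ ≤ r * ‖g r‖^2 := hcon r (hM ▸ hrM)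
        refine ENNReal.ofReal_le_ofReal ?_
        have hr1 : (1:ℝ) ≤ r := hM1.trans hrM
        nlinarith [norm_nonneg (g r), sq_nonneg (‖g r‖)]
    _ ≤ ∫⁻ r in Ioi 0, ENNReal.ofReal (r^2 * ‖g r‖^2) := by
        refine lintegral_mono_set fun r hr => ?_
        exact lt_of_lt_of_le (lt_of_lt_of_le one_pos hM1) (le_of_lt hr)

lemma lintegral_Ioi_sup (φ : ℝ → ℝ≥0∞) (hφ : Measurable φ) :
    ∫⁻ r in Ioi (0:ℝ), φ r
      = ⨆ n : ℕ, ∫⁻ r in Ioc (1/(n+1):ℝ) ((n:ℝ)+1), φ r := by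
  set s : ℕ → Set ℝ := fun n => Ioc (1/(n+1):ℝ) ((n:ℝ)+1) with hs
  have hmono : ∀ n, s n ⊆ s (n+1) := by
    intro n x hx
    constructor
    · refine lt_of_lt_of_le ?_ hx.1.le
      rw [div_lt_div_iff₀ (by positivity) (by positivity)]
      push_cast; nlinarith [Nat.cast_nonneg (α := ℝ) n]
    · exact hx.2.trans (by push_cast; linarith)
  have hsub : ∀ n, s n ⊆ Ioi 0 := by
    intro n x hx
    exact lt_trans (by positivity) hx.1
  have hcover : ∀ x ∈ Ioi (0:ℝ), ∃ n, x ∈ s n := by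
    intro x hx
    obtain ⟨n, hn⟩ := exists_nat_gt (max (1/x) x)
    refine ⟨n, ?_, ?_⟩
    · rw [div_lt_iff₀ (by positivity)]
      have h1 : 1/x < n := lt_of_le_of_lt (le_max_left _ _) hn
      rw [div_lt_iff₀ hx] at h1
      nlinarith
    · have := lt_of_le_of_lt (le_max_right _ _) hn
      linarith
  set F : ℕ → ℝ → ℝ≥0∞ := fun n => (s n).indicator φ with hF
  have hFmeas : ∀ n, Measurable (F n) := fun n => hφ.indicator measurableSet_Ioc
  have hFmono : Monotone F := by
    refine monotone_nat_of_le_succ fun n x => ?_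
    exact indicator_le_indicator_of_subset (hmono n) (fun _ => zero_le) x
  have hsupF : ∀ x, (⨆ n, F n x) = (Ioi (0:ℝ)).indicator φ x := by
    intro x
    by_cases hx : x ∈ Ioi (0:ℝ)
    · obtain ⟨n, hn⟩ := hcover x hx
      rw [indicator_of_mem hx]
      refine le_antisymm (iSup_le fun m => ?_) ?_
      · by_cases hxm : x ∈ s m
        · rw [hF]; simp only [indicator_of_mem hxm]; exact le_rfl
        · rw [hF]; simp only [indicator_of_notMem hxm]; exact zero_le
      · refine le_trans ?_ (le_iSup _ n)
        rw [hF]; simp only [indicator_of_mem hn]; exact le_rfl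
    · rw [indicator_of_notMem hx]
      refine le_antisymm (iSup_le fun m => ?_) (zero_le)
      have : x ∉ s m := fun h => hx (hsub m h)
      rw [hF]; simp [indicator_of_notMem this]
  calc ∫⁻ r in Ioi (0:ℝ), φ r = ∫⁻ r, (Ioi (0:ℝ)).indicator φ r := by
        rw [lintegral_indicator measurableSet_Ioi _]
    _ = ∫⁻ r, ⨆ n, F n r := by
        refine lintegral_congr fun r => (hsupF r).symm
    _ = ⨆ n, ∫⁻ r, F n r := lintegral_iSup hFmeas hFmono
    _ = ⨆ n, ∫⁻ r in s n, φ r := by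
        refine iSup_congr fun n => ?_
        rw [hF]; exact lintegral_indicator measurableSet_Ioc _

lemma hardy_1d (g : ℝ → ℂ) (hg : Differentiable ℝ g)
    (hA2 : ∫⁻ r in Ioi (0:ℝ), ENNReal.ofReal (r^2 * ‖g r‖^2) ≠ ∞) :
    ∫⁻ r in Ioi (0:ℝ), ENNReal.ofReal (‖g r‖^2)
      ≤ 4 * ∫⁻ r in Ioi (0:ℝ), ENNReal.ofReal (r^2 * ‖deriv g r‖^2) := by
  have hgc : Continuous g := hg.continuous
  have hc1 : Continuous fun r : ℝ => ‖g r‖^2 := by fun_prop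
  have hdm : Measurable fun r : ℝ => r^2*‖deriv g r‖^2 := by
    have : Measurable (deriv g) := measurable_deriv g
    fun_prop
  set B := ∫⁻ r in Ioi (0:ℝ), ENNReal.ofReal (r^2 * ‖deriv g r‖^2) with hBdef
  by_cases hB : B = ∞
  · rw [hB]
    simp
  -- supremum representation
  rw [lintegral_Ioi_sup _ (by fun_prop)]
  refine iSup_le fun n => ?_
  set ε : ℝ := 1/(n+1) with hε'
  have hε : 0 < ε := by positivity
  have hεR₀ : ε ≤ (n:ℝ)+1 := by
    rw [hε', div_le_iff₀ (by positivity)]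
    nlinarith [Nat.cast_nonneg (α := ℝ) n]
  refine ENNReal.le_of_forall_pos_le_add fun δ hδ h4B => ?_
  obtain ⟨R, hRmax, hRsmall⟩ := hardy_decay g hA2 ((δ:ℝ)/2) (by positivity) ((n:ℝ)+1)
  have hR1 : (n:ℝ)+1 ≤ R := (le_max_left _ _).trans hRmax
  have hεR : ε ≤ R := hεR₀.trans hR1
  have hIB : IntegrableOn (fun r => r^2*‖deriv g r‖^2) (Ioc ε R) volume := by
    refine ⟨hdm.aestronglyMeasurable.restrict, ?_⟩
    rw [hasFiniteIntegral_iff_ofReal (Filter.Eventually.of_forall fun r => by positivity)]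
    exact lt_of_le_of_lt (lintegral_mono_set fun r hr => hε.trans hr.1) (Ne.lt_top hB)
  have hcore := hardy_core g hg hε hεR hIB
  -- pass to ofReal
  have hInt1 : IntegrableOn (fun r => ‖g r‖^2) (Ioc ε R) volume := by
    exact (hc1.integrableOn_Ioc)
  have heq1 : ∫⁻ r in Ioc ε R, ENNReal.ofReal (‖g r‖^2)
      = ENNReal.ofReal (∫ r in Ioc ε R, ‖g r‖^2) :=
    (ofReal_integral_eq_lintegral_ofReal hInt1
      (Filter.Eventually.of_forall fun r => by positivity)).symm
  have heq2 : ∫⁻ r in Ioc ε R, ENNReal.ofReal (r^2*‖deriv g r‖^2)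
      = ENNReal.ofReal (∫ r in Ioc ε R, r^2*‖deriv g r‖^2) :=
    (ofReal_integral_eq_lintegral_ofReal hIB
      (Filter.Eventually.of_forall fun r => by positivity)).symm
  calc ∫⁻ r in Ioc ε ((n:ℝ)+1), ENNReal.ofReal (‖g r‖^2)
      ≤ ∫⁻ r in Ioc ε R, ENNReal.ofReal (‖g r‖^2) :=
        lintegral_mono_set (Ioc_subset_Ioc le_rfl hR1)
    _ = ENNReal.ofReal (∫ r in Ioc ε R, ‖g r‖^2) := heq1
    _ ≤ ENNReal.ofReal (2*(R*‖g R‖^2) + 4*(∫ r in Ioc ε R, r^2*‖deriv g r‖^2)) :=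
        ENNReal.ofReal_le_ofReal hcore
    _ ≤ ENNReal.ofReal (2*(R*‖g R‖^2)) + ENNReal.ofReal (4*(∫ r in Ioc ε R, r^2*‖deriv g r‖^2)) :=
        ENNReal.ofReal_add_le
    _ ≤ (δ : ℝ≥0∞) + 4 * B := by
        have hb1 : ENNReal.ofReal (2*(R*‖g R‖^2)) ≤ (δ : ℝ≥0∞) := by
          calc ENNReal.ofReal (2*(R*‖g R‖^2)) ≤ ENNReal.ofReal (δ:ℝ) :=
                ENNReal.ofReal_le_ofReal (by linarith)
            _ = (δ : ℝ≥0∞) := ENNReal.ofReal_coe_nnreal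
        have hb2 : ENNReal.ofReal (4*(∫ r in Ioc ε R, r^2*‖deriv g r‖^2)) ≤ 4 * B := by
          rw [ENNReal.ofReal_mul (by norm_num)]
          have h4 : ENNReal.ofReal (4:ℝ) = (4:ℝ≥0∞) := by norm_num
          rw [h4]
          gcongr
          rw [← heq2]
          exact lintegral_mono_set fun r hr => hε.trans hr.1
        exact add_le_add hb1 hb2
    _ = 4 * B + δ := by ring

lemma memLp_sq_lintegral_ne_top {F : Type*} [NormedAddCommGroup F]
    {f : E3 → F} (hf : MemLp f 2 (volume : Measure E3)) :
    ∫⁻ x, ENNReal.ofReal (‖f x‖^2) ≠ ∞ := by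
  have h := hf.integrable_norm_rpow two_ne_zero ENNReal.ofNat_ne_top
  have h2 : (2:ℝ≥0∞).toReal = (2:ℝ) := by simp
  rw [h2] at h
  have h3 : (fun x => ‖f x‖ ^ (2:ℝ)) = fun x => ‖f x‖^2 := by
    funext x
    rw [show (2:ℝ) = ((2:ℕ):ℝ) by norm_num, Real.rpow_natCast]
  rw [h3] at h
  have := h.2
  rw [hasFiniteIntegral_iff_ofReal (Filter.Eventually.of_forall fun x => by positivity)] at this
  exact this.ne

/-- **Hardy's inequality**: there exists `c > 0` such that for every function `f`
in the Sobolev space `W^{1,2}(ℝ³)` (formalized as: `f` is differentiable, `f ∈ L²`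
and its gradient `fderiv ℝ f ∈ L²`), one has
`∫ ‖t‖⁻² ‖f t‖² ≤ c * ∫ ‖∇ f t‖²`. -/
theorem hardy_inequality :
    ∃ c : ℝ, 0 < c ∧
      ∀ f : EuclideanSpace ℝ (Fin 3) → ℂ,
        Differentiable ℝ f →
        MemLp f 2 (volume : Measure (EuclideanSpace ℝ (Fin 3))) →
        MemLp (fun t => fderiv ℝ f t) 2 (volume : Measure (EuclideanSpace ℝ (Fin 3))) →
        ∫ t : EuclideanSpace ℝ (Fin 3), (‖t‖ ^ 2)⁻¹ * ‖f t‖ ^ 2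
          ≤ c * ∫ t : EuclideanSpace ℝ (Fin 3), ‖fderiv ℝ f t‖ ^ 2 := by
  refine ⟨4, by norm_num, fun f hf hf2 hdf2 => ?_⟩
  have hfc : Continuous f := hf.continuous
  have hfm : Measurable f := hfc.measurable
  have hdm : Measurable (fderiv ℝ f) := measurable_fderiv ℝ f
  have hdnm : Measurable fun x : E3 => ‖fderiv ℝ f x‖ := hdm.norm
  -- the three lintegrals
  set L : ℝ≥0∞ := ∫⁻ x : E3, ENNReal.ofReal ((‖x‖^2)⁻¹ * ‖f x‖^2) with hL
  set R2 : ℝ≥0∞ := ∫⁻ x : E3, ENNReal.ofReal (‖fderiv ℝ f x‖^2) with hR2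
  have hφ1m : Measurable fun x : E3 => ENNReal.ofReal ((‖x‖^2)⁻¹ * ‖f x‖^2) := by fun_prop
  have hφ2m : Measurable fun x : E3 => ENNReal.ofReal (‖fderiv ℝ f x‖^2) := by fun_prop
  have hφ0m : Measurable fun x : E3 => ENNReal.ofReal (‖f x‖^2) := by fun_prop
  -- finiteness
  have hR2fin : R2 ≠ ∞ := memLp_sq_lintegral_ne_top hdf2
  have hA2fin : (∫⁻ x : E3, ENNReal.ofReal (‖f x‖^2)) ≠ ∞ := memLp_sq_lintegral_ne_top hf2
  -- polar decompositions
  have hpolarL : L = ∫⁻ (ω : sphere (0:E3) 1), (∫⁻ r in Ioi (0:ℝ),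
      ENNReal.ofReal (‖f (r • (ω:E3))‖^2) ∂volume) ∂(volume : Measure E3).toSphere := by
    rw [hL, lintegral_polar _ hφ1m]
    refine lintegral_congr fun ω => ?_
    refine setLIntegral_congr_fun measurableSet_Ioi (fun r hr => ?_)
    have hnr : ‖r • (ω:E3)‖ = r := by
      rw [norm_smul, Real.norm_eq_abs, abs_of_pos hr, mem_sphere_zero_iff_norm.1 ω.2, mul_one]
    rw [hnr, ← ENNReal.ofReal_mul (by positivity)]
    congr 1
    have hr0 : r ≠ 0 := ne_of_gt hr
    field_simp
  have hpolarR : R2 = ∫⁻ (ω : sphere (0:E3) 1), (∫⁻ r in Ioi (0:ℝ),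
      ENNReal.ofReal (r^2 * ‖fderiv ℝ f (r • (ω:E3))‖^2) ∂volume) ∂(volume : Measure E3).toSphere := by
    rw [hR2, lintegral_polar _ hφ2m]
    refine lintegral_congr fun ω => ?_
    refine setLIntegral_congr_fun measurableSet_Ioi (fun r hr => ?_)
    rw [← ENNReal.ofReal_mul (by positivity)]
  have hpolarA : (∫⁻ x : E3, ENNReal.ofReal (‖f x‖^2))
      = ∫⁻ (ω : sphere (0:E3) 1), (∫⁻ r in Ioi (0:ℝ),
      ENNReal.ofReal (r^2 * ‖f (r • (ω:E3))‖^2) ∂volume) ∂(volume : Measure E3).toSphere := by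
    rw [lintegral_polar _ hφ0m]
    refine lintegral_congr fun ω => ?_
    refine setLIntegral_congr_fun measurableSet_Ioi (fun r hr => ?_)
    rw [← ENNReal.ofReal_mul (by positivity)]
  -- a.e. finiteness of the radial second moment
  have hA2meas : Measurable fun ω : sphere (0:E3) 1 => ∫⁻ r in Ioi (0:ℝ),
      ENNReal.ofReal (r^2 * ‖f (r • (ω:E3))‖^2) ∂volume := by
    have hu : Measurable (Function.uncurry fun (ω : sphere (0:E3) 1) (r : ℝ) =>
        ENNReal.ofReal (r^2 * ‖f (r • (ω:E3))‖^2)) := by fun_prop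
    exact hu.lintegral_prod_right
  have hA2ae : ∀ᵐ (ω : sphere (0:E3) 1) ∂((volume : Measure E3).toSphere), (∫⁻ r in Ioi (0:ℝ),
      ENNReal.ofReal (r^2 * ‖f (r • (ω:E3))‖^2) ∂volume) ≠ ∞ := by
    have := ae_lt_top hA2meas (by rw [← hpolarA]; exact hA2fin)
    filter_upwards [this] with ω hω using hω.ne
  -- pointwise radial Hardy
  have hkey : L ≤ 4 * R2 := by
    have hu2 : Measurable (Function.uncurry fun (ω : sphere (0:E3) 1) (r : ℝ) =>
        ENNReal.ofReal (r^2 * ‖fderiv ℝ f (r • (ω:E3))‖^2)) := by fun_prop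
    rw [hpolarL, hpolarR, ← lintegral_const_mul _ hu2.lintegral_prod_right]
    refine lintegral_mono_ae ?_
    filter_upwards [hA2ae] with ω hω
    set g : ℝ → ℂ := fun r => f (r • (ω:E3)) with hg
    have hsm : Differentiable ℝ fun r : ℝ => r • (ω:E3) := fun r =>
      ((hasDerivAt_id r).smul_const (ω:E3)).differentiableAt
    have hgd : Differentiable ℝ g := fun r => (hf _).comp r (hsm r)
    have hderiv : ∀ r : ℝ, deriv g r = fderiv ℝ f (r • (ω:E3)) (ω:E3) := by
      intro r
      have h1 : HasDerivAt (fun s : ℝ => s • (ω:E3)) ((1:ℝ) • (ω:E3)) r :=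
        (hasDerivAt_id r).smul_const (ω:E3)
      rw [one_smul] at h1
      exact ((hf (r • (ω:E3))).hasFDerivAt.comp_hasDerivAt r h1).deriv
    have hdle : ∀ r : ℝ, ‖deriv g r‖ ≤ ‖fderiv ℝ f (r • (ω:E3))‖ := by
      intro r
      rw [hderiv r]
      calc ‖fderiv ℝ f (r • (ω:E3)) (ω:E3)‖
          ≤ ‖fderiv ℝ f (r • (ω:E3))‖ * ‖(ω:E3)‖ := ContinuousLinearMap.le_opNorm _ _
        _ = ‖fderiv ℝ f (r • (ω:E3))‖ := by
            rw [mem_sphere_zero_iff_norm.1 ω.2, mul_one]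
    calc ∫⁻ r in Ioi (0:ℝ), ENNReal.ofReal (‖g r‖^2)
        ≤ 4 * ∫⁻ r in Ioi (0:ℝ), ENNReal.ofReal (r^2 * ‖deriv g r‖^2) := hardy_1d g hgd hω
      _ ≤ 4 * ∫⁻ r in Ioi (0:ℝ), ENNReal.ofReal (r^2 * ‖fderiv ℝ f (r • (ω:E3))‖^2) := by
          gcongr with r
          exact hdle r
  -- back to Bochner integrals
  have hLfin : L ≠ ∞ := by
    refine ne_of_lt (lt_of_le_of_lt hkey ?_)
    exact ENNReal.mul_lt_top (by norm_num) (Ne.lt_top hR2fin)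
  have hLHS : ∫ t : E3, (‖t‖^2)⁻¹ * ‖f t‖^2 = L.toReal := by
    rw [hL, integral_eq_lintegral_of_nonneg_ae
      (Filter.Eventually.of_forall fun x => by positivity)
      (by fun_prop : Measurable fun x : E3 => (‖x‖^2)⁻¹ * ‖f x‖^2).aestronglyMeasurable]
  have hRHS : ∫ t : E3, ‖fderiv ℝ f t‖^2 = R2.toReal := by
    rw [hR2, integral_eq_lintegral_of_nonneg_ae
      (Filter.Eventually.of_forall fun x => by positivity)
      (by fun_prop : Measurable fun x : E3 => ‖fderiv ℝ f x‖^2).aestronglyMeasurable]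
  rw [hLHS, hRHS]
  calc L.toReal ≤ (4 * R2).toReal := by
        refine ENNReal.toReal_mono ?_ hkey
        exact ENNReal.mul_ne_top (by norm_num) hR2fin
    _ = 4 * R2.toReal := by
        rw [ENNReal.toReal_mul]
        norm_num
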